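/- Let A be the direct limit of the groups Gₙ = Alt(Xₙ) × Alt(Yₙ) (products of alternating groups on finite sets Xₙ, Yₙ with |Xₙ|, |Yₙ| → ∞, |Xₙ|, |Yₙ| ≥ 5) along injective homomorphisms φₙ : Gₙ → Gₙ₊₁ with the property that for every nontrivial g ∈ Gₙ, both coordinates of φₙ(φₙ₊₁(g)) ∈ Alt(Xₙ₊₂) × Alt(Yₙ₊₂) are nontrivial. Then A is a simple group. -/

import Mathlib

open Filter

open Equiv Equiv.Perm Subgroup in
private lemma my_comm_ne_one {G : Type*} [Group G] {s t : G} (h : s * t ≠ t * s) :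
    s * t * s⁻¹ * t⁻¹ ≠ 1 := by
  intro h1
  apply h
  have h2 : s * t * s⁻¹ = t := by rwa [mul_inv_eq_one] at h1
  calc s * t = s * t * s⁻¹ * s := by group
    _ = t * s := by rw [h2]

open Equiv Equiv.Perm Finset in
/-- For a nontrivial even permutation on a set of size ≥ 5, there is a three-cycle
not commuting with it, such that the commutator has support of size ≤ 5. -/
private lemma my_exists_threeCycle_noncomm {α : Type*} [Fintype α] [DecidableEq α]
    (h5 : 5 ≤ Fintype.card α) {σ : Perm α} (hσ : σ ≠ 1) :
    ∃ τ : Perm α, τ.IsThreeCycle ∧ σ * τ ≠ τ * σ ∧ (σ * τ * σ⁻¹ * τ⁻¹).support.card ≤ 5 := by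
  have ha : ∃ a, σ a ≠ a := by
    by_contra h
    push_neg at h
    exact hσ (Equiv.ext h)
  obtain ⟨a, ha⟩ := ha
  set b := σ a with hb
  have hab : a ≠ b := fun h => ha h.symm
  -- choose c outside {a, b, σ⁻¹ a}
  have hcc : (({a, b, σ⁻¹ a} : Finset α)ᶜ).Nonempty := by
    rw [← Finset.card_pos, Finset.card_compl]
    have h3 : ({a, b, σ⁻¹ a} : Finset α).card ≤ 3 := by
      refine le_trans (Finset.card_insert_le _ _) ?_
      have := Finset.card_insert_le b ({σ⁻¹ a} : Finset α)
      simp only [Finset.card_singleton] at this ⊢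
      omega
    omega
  obtain ⟨c, hc⟩ := hcc
  simp only [Finset.mem_compl, Finset.mem_insert, Finset.mem_singleton, not_or] at hc
  obtain ⟨hca, hcb, hcs⟩ := hc
  set τ := swap a b * swap a c with hτ
  have hτa : τ a = c := by
    simp only [hτ, Equiv.Perm.mul_apply, swap_apply_left]
    exact swap_apply_of_ne_of_ne hca hcb
  have hτb : τ b = a := by
    simp only [hτ, Equiv.Perm.mul_apply]
    rw [swap_apply_of_ne_of_ne (Ne.symm hab) (fun h => hcb h.symm), swap_apply_right]
  have hτsupp : τ.support ⊆ {a, b, c} := by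
    refine le_trans (support_mul_le _ _) ?_
    rw [support_swap hab, support_swap (fun h => hca h.symm)]
    intro x hx
    simp only [Finset.sup_eq_union, Finset.mem_union, Finset.mem_insert,
      Finset.mem_singleton] at hx ⊢
    tauto
  refine ⟨τ, isThreeCycle_swap_mul_swap_same hab (Ne.symm hca) (Ne.symm hcb), ?_, ?_⟩
  ·
    -- noncommuting: evaluate conjugate at b
    intro h
    have h2 : σ * τ * σ⁻¹ = τ := by
      rw [h, mul_assoc, mul_inv_cancel, mul_one]
    have h3 := congrArg (fun f : Perm α => f b) h2
    simp only [Equiv.Perm.mul_apply] at h3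
    rw [show σ⁻¹ b = a by rw [hb]; exact σ.symm_apply_apply a, hτa, hτb] at h3
    exact hcs (by rw [← h3, show σ⁻¹ (σ c) = c from σ.symm_apply_apply c])
  ·
    -- support bound
    have hsub : (σ * τ * σ⁻¹ * τ⁻¹).support ⊆ ({a, b, c, σ b, σ c} : Finset α) := by
      refine le_trans (support_mul_le _ _) ?_
      intro x hx
      simp only [Finset.sup_eq_union, Finset.mem_union] at hx
      rcases hx with hx | hx
      · rw [support_conj] at hx
        simp only [Finset.mem_map, Equiv.coe_toEmbedding] at hx
        obtain ⟨y, hy, rfl⟩ := hx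
        have := hτsupp hy
        simp only [Finset.mem_insert, Finset.mem_singleton] at this ⊢
        rcases this with rfl | rfl | rfl
        · right; left; rfl
        · right; right; right; left; rfl
        · right; right; right; right; rfl
      · rw [support_inv] at hx
        have := hτsupp hx
        simp only [Finset.mem_insert, Finset.mem_singleton] at this ⊢
        tauto
    refine le_trans (Finset.card_le_card hsub) ?_
    have h1 := Finset.card_insert_le a ({b, c, σ b, σ c} : Finset α)
    have h2 := Finset.card_insert_le b ({c, σ b, σ c} : Finset α)
    have h3 := Finset.card_insert_le c ({σ b, σ c} : Finset α)
    have h4 := Finset.card_insert_le (σ b) ({σ c} : Finset α)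
    have h5 : ({σ c} : Finset α).card = 1 := Finset.card_singleton _
    omega

open Equiv Equiv.Perm Subgroup Finset in
set_option maxHeartbeats 1000000 in
/-- A nontrivial normal subgroup of an alternating group on ≥ 5 points is everything. -/
private lemma my_alt_normal_eq_top {α : Type*} [Fintype α] [DecidableEq α]
    (h5 : 5 ≤ Fintype.card α) (N : Subgroup (alternatingGroup α)) (hN : N.Normal)
    {x : alternatingGroup α} (hx : x ∈ N) (hx1 : x ≠ 1) : N = ⊤ := by
  haveI := hN
  set σ : Perm α := (x : Perm α) with hσdef
  have hσ : σ ≠ 1 := fun h => hx1 (Subtype.ext h)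
  obtain ⟨τ, hτ3, hcm, hcard⟩ := my_exists_threeCycle_noncomm h5 hσ
  set t : alternatingGroup α := ⟨τ, hτ3.mem_alternatingGroup⟩ with ht
  set ρ : alternatingGroup α := x * t * x⁻¹ * t⁻¹ with hρ
  have hρcoe : (ρ : Perm α) = σ * τ * σ⁻¹ * τ⁻¹ := rfl
  have hρN : ρ ∈ N := by
    have h1 : t * x⁻¹ * t⁻¹ ∈ N := hN.conj_mem _ (inv_mem hx) t
    have h2 : x * (t * x⁻¹ * t⁻¹) ∈ N := N.mul_mem hx h1
    have h3 : x * (t * x⁻¹ * t⁻¹) = ρ := by rw [hρ]; group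
    rwa [h3] at h2
  have hρ1 : (ρ : Perm α) ≠ 1 := by
    rw [hρcoe]
    exact my_comm_ne_one hcm
  have hρsupp : (ρ : Perm α).support.card ≤ 5 := by rw [hρcoe]; exact hcard
  -- find a 5-element superset S of the support
  obtain ⟨S, hSsub, -, hScard⟩ := Finset.exists_subsuperset_card_eq
    ((ρ : Perm α).support.subset_univ) hρsupp (by rwa [Finset.card_univ])
  have hScard' : Fintype.card {y // y ∈ S} = 5 := by rw [Fintype.card_coe]; exact hScard
  let f : Fin 5 ≃ {y // y ∈ S} := (Fintype.equivFinOfCardEq hScard').symm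
  let φ : Perm (Fin 5) →* Perm α := Equiv.Perm.extendDomainHom f
  have hφ : ∀ π : Perm (Fin 5), φ π = π.extendDomain f := fun _ => rfl
  have hsign : ∀ π : Perm (Fin 5), Equiv.Perm.sign (φ π) = Equiv.Perm.sign π := fun π => by
    rw [hφ]; exact Equiv.Perm.sign_extendDomain π f
  let ψ : alternatingGroup (Fin 5) →* alternatingGroup α :=
    MonoidHom.codRestrict (φ.comp (alternatingGroup (Fin 5)).subtype) _
      (fun g => by
        rw [Equiv.Perm.mem_alternatingGroup, MonoidHom.comp_apply, hsign]
        exact Equiv.Perm.mem_alternatingGroup.1 g.2)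
  have hψcoe : ∀ g : alternatingGroup (Fin 5), (ψ g : Perm α) = φ (g : Perm (Fin 5)) :=
    fun _ => rfl
  let M : Subgroup (alternatingGroup (Fin 5)) := N.comap ψ
  haveI hM : M.Normal := hN.comap ψ
  -- ρ comes from a permutation of Fin 5
  have hmemS : ∀ y : α, y ∈ S ↔ (ρ : Perm α) y ∈ S := by
    intro y
    constructor
    · intro hy
      by_contra hny
      have hfix : (ρ : Perm α) ((ρ : Perm α) y) = (ρ : Perm α) y :=
        Equiv.Perm.notMem_support.1 (fun hs => hny (hSsub hs))
      have : (ρ : Perm α) y = y := (ρ : Perm α).injective hfix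
      exact hny (by rw [this]; exact hy)
    · intro hy
      by_contra hny
      have hfix : (ρ : Perm α) y = y := Equiv.Perm.notMem_support.1 (fun hs => hny (hSsub hs))
      exact hny (hfix ▸ hy)
  let ρ' : Perm {y // y ∈ S} := (ρ : Perm α).subtypePerm (fun y => (hmemS y).symm)
  let π : Perm (Fin 5) := (Equiv.permCongr f.symm) ρ'
  have hφπ : φ π = (ρ : Perm α) := by
    rw [hφ]
    ext y
    by_cases hy : y ∈ S
    · rw [Equiv.Perm.extendDomain_apply_subtype _ f hy]
      simp only [π, Equiv.permCongr_apply, Equiv.symm_symm, Equiv.symm_apply_apply,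
        Equiv.apply_symm_apply]
      rfl
    · rw [Equiv.Perm.extendDomain_apply_not_subtype _ f hy]
      exact (Equiv.Perm.notMem_support.1 (fun hs => hy (hSsub hs))).symm
  have hπmem : π ∈ alternatingGroup (Fin 5) := by
    rw [Equiv.Perm.mem_alternatingGroup, ← hsign, hφπ]
    exact Equiv.Perm.mem_alternatingGroup.1 ρ.2
  have hPiM : (⟨π, hπmem⟩ : alternatingGroup (Fin 5)) ∈ M := by
    have : ψ ⟨π, hπmem⟩ = ρ := Subtype.ext (by rw [hψcoe]; exact hφπ)
    show ψ _ ∈ N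
    rw [this]; exact hρN
  have hPi1 : (⟨π, hπmem⟩ : alternatingGroup (Fin 5)) ≠ 1 := by
    intro h
    apply hρ1
    have : π = 1 := congrArg Subtype.val h
    rw [← hφπ, this, map_one]
  have hMtop : M = ⊤ := by
    rcases IsSimpleGroup.eq_bot_or_eq_top_of_normal M hM with h | h
    · exact absurd (h ▸ hPiM) (by simp [Subgroup.mem_bot, hPi1])
    · exact h
  -- a three-cycle in N
  have h3c : Equiv.Perm.IsThreeCycle
      (Equiv.swap (0 : Fin 5) 1 * Equiv.swap (0 : Fin 5) 2) :=
    Equiv.Perm.isThreeCycle_swap_mul_swap_same (by decide) (by decide) (by decide)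
  set c₀ : Perm (Fin 5) := Equiv.swap (0 : Fin 5) 1 * Equiv.swap (0 : Fin 5) 2 with hc₀
  have hC : (⟨c₀, h3c.mem_alternatingGroup⟩ : alternatingGroup (Fin 5)) ∈ M :=
    hMtop ▸ Subgroup.mem_top _
  have hψC : ψ ⟨c₀, h3c.mem_alternatingGroup⟩ ∈ N := hC
  have h3C : Equiv.Perm.IsThreeCycle (φ c₀) := by
    unfold Equiv.Perm.IsThreeCycle
    rw [hφ, Equiv.Perm.cycleType_extendDomain]
    exact h3c
  set F : alternatingGroup α := ψ ⟨c₀, h3c.mem_alternatingGroup⟩ with hF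
  have h3C' : Equiv.Perm.IsThreeCycle (F : Perm α) := by
    rw [hF, hψcoe]; exact h3C
  rw [eq_top_iff, ← h3C'.alternating_normalClosure (by rw [Nat.card_eq_fintype_card]; exact h5)]
  refine Subgroup.normalClosure_le_normal ?_
  rw [Set.singleton_subset_iff, SetLike.mem_coe]
  have hFeq : (⟨(F : Perm α), h3C'.mem_alternatingGroup⟩ : alternatingGroup α) = F :=
    Subtype.ext rfl
  rw [hFeq]
  exact hψC

open Equiv Equiv.Perm Subgroup in
private lemma my_prod_normal_eq_top {X Y : Type*} [Fintype X] [DecidableEq X]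
    [Fintype Y] [DecidableEq Y]
    (hX5 : 5 ≤ Fintype.card X) (hY5 : 5 ≤ Fintype.card Y)
    (N : Subgroup (alternatingGroup X × alternatingGroup Y)) (hN : N.Normal)
    {g : alternatingGroup X × alternatingGroup Y} (hg : g ∈ N)
    (h1 : g.1 ≠ 1) (h2 : g.2 ≠ 1) : N = ⊤ := by
  have key1 : ∀ s : alternatingGroup X, ((s, 1) : alternatingGroup X × alternatingGroup Y) ∈ N := by
    have hσ : (g.1 : Perm X) ≠ 1 := fun h => h1 (Subtype.ext h)
    obtain ⟨τ, hτ3, hcm, -⟩ := my_exists_threeCycle_noncomm hX5 hσ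
    set t : alternatingGroup X := ⟨τ, hτ3.mem_alternatingGroup⟩ with ht
    set u : alternatingGroup X × alternatingGroup Y := (t, 1) with hu
    set c := u * g * u⁻¹ * g⁻¹ with hc
    have hcN : c ∈ N := N.mul_mem (hN.conj_mem g hg u) (inv_mem hg)
    have hc1 : c.1 = t * g.1 * t⁻¹ * g.1⁻¹ := rfl
    have hc2 : c.2 = 1 := by
      show (1 : alternatingGroup Y) * g.2 * 1⁻¹ * g.2⁻¹ = 1
      group
    have hc1ne : c.1 ≠ 1 := by
      intro h
      rw [hc1] at h
      have hval := congrArg Subtype.val h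
      exact my_comm_ne_one (fun hh => hcm hh.symm) hval
    let N₁ := N.comap (MonoidHom.inl (alternatingGroup X) (alternatingGroup Y))
    have hN₁ : N₁.Normal := hN.comap _
    have hc1mem : c.1 ∈ N₁ := by
      show MonoidHom.inl _ _ c.1 ∈ N
      have heq : MonoidHom.inl (alternatingGroup X) (alternatingGroup Y) c.1 = c :=
        Prod.ext rfl hc2.symm
      rw [heq]
      exact hcN
    have htop := my_alt_normal_eq_top hX5 N₁ hN₁ hc1mem hc1ne
    intro s
    have hs : s ∈ N₁ := by rw [htop]; exact Subgroup.mem_top s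
    exact hs
  have key2 : ∀ s : alternatingGroup Y, ((1, s) : alternatingGroup X × alternatingGroup Y) ∈ N := by
    have hσ : (g.2 : Perm Y) ≠ 1 := fun h => h2 (Subtype.ext h)
    obtain ⟨τ, hτ3, hcm, -⟩ := my_exists_threeCycle_noncomm hY5 hσ
    set t : alternatingGroup Y := ⟨τ, hτ3.mem_alternatingGroup⟩ with ht
    set u : alternatingGroup X × alternatingGroup Y := (1, t) with hu
    set c := u * g * u⁻¹ * g⁻¹ with hc
    have hcN : c ∈ N := N.mul_mem (hN.conj_mem g hg u) (inv_mem hg)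
    have hc2' : c.2 = t * g.2 * t⁻¹ * g.2⁻¹ := rfl
    have hc1' : c.1 = 1 := by
      show (1 : alternatingGroup X) * g.1 * 1⁻¹ * g.1⁻¹ = 1
      group
    have hc2ne : c.2 ≠ 1 := by
      intro h
      rw [hc2'] at h
      have hval := congrArg Subtype.val h
      exact my_comm_ne_one (fun hh => hcm hh.symm) hval
    let N₂ := N.comap (MonoidHom.inr (alternatingGroup X) (alternatingGroup Y))
    have hN₂ : N₂.Normal := hN.comap _
    have hc2mem : c.2 ∈ N₂ := by
      show MonoidHom.inr _ _ c.2 ∈ N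
      have heq : MonoidHom.inr (alternatingGroup X) (alternatingGroup Y) c.2 = c :=
        Prod.ext hc1'.symm rfl
      rw [heq]
      exact hcN
    have htop := my_alt_normal_eq_top hY5 N₂ hN₂ hc2mem hc2ne
    intro s
    have hs : s ∈ N₂ := by rw [htop]; exact Subgroup.mem_top s
    exact hs
  rw [Subgroup.eq_top_iff']
  intro x
  have hx : x = (x.1, 1) * (1, x.2) := Prod.ext (by simp) (by simp)
  rw [hx]
  exact N.mul_mem (key1 x.1) (key2 x.2)

theorem direct_limit_of_alternating_products_simple
    {A : Type*} [Group A]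
    (X Y : ℕ → Type*) [∀ n, Fintype (X n)] [∀ n, DecidableEq (X n)]
    [∀ n, Fintype (Y n)] [∀ n, DecidableEq (Y n)]
    (hX5 : ∀ n, 5 ≤ Fintype.card (X n)) (hY5 : ∀ n, 5 ≤ Fintype.card (Y n))
    (hXtop : Tendsto (fun n => Fintype.card (X n)) atTop atTop)
    (hYtop : Tendsto (fun n => Fintype.card (Y n)) atTop atTop)
    (K : ℕ → Subgroup A) (hmono : Monotone K) (hsup : (⨆ n, K n) = ⊤)
    (e : ∀ n, K n ≃* (alternatingGroup (X n) × alternatingGroup (Y n)))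
    (hkey : ∀ (n : ℕ) (g : A) (hg : g ∈ K n), g ≠ 1 →
      ((e (n + 2) ⟨g, hmono (by omega) hg⟩).1 ≠ 1 ∧
       (e (n + 2) ⟨g, hmono (by omega) hg⟩).2 ≠ 1)) :
    IsSimpleGroup A := by
  have hnontriv : Nontrivial A := by
    haveI := alternatingGroup.nontrivial_of_three_le_card (α := X 0)
      (by rw [Nat.card_eq_fintype_card]; exact le_trans (by norm_num) (hX5 0))
    obtain ⟨a, ha⟩ := exists_ne (1 : alternatingGroup (X 0))
    refine ⟨⟨(((e 0).symm (a, 1) : K 0) : A), 1, ?_⟩⟩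
    intro h
    apply ha
    have hk1 : (e 0).symm (a, 1) = 1 := Subtype.ext (by rw [h]; rfl)
    have := congrArg (e 0) hk1
    rw [MulEquiv.apply_symm_apply, map_one] at this
    exact congrArg Prod.fst this
  refine { toNontrivial := hnontriv, eq_bot_or_eq_top_of_normal := ?_ }
  intro N hN
  rcases N.bot_or_exists_ne_one with h | ⟨g, hgN, hg1⟩
  · left; exact h
  right
  obtain ⟨n, hgn⟩ := (Subgroup.mem_iSup_of_directed hmono.directed_le).1
    (hsup ▸ Subgroup.mem_top g)
  rw [Subgroup.eq_top_iff']
  intro a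
  obtain ⟨p, hp⟩ := (Subgroup.mem_iSup_of_directed hmono.directed_le).1
    (hsup ▸ Subgroup.mem_top a)
  have hgm : g ∈ K (max n p) := hmono (le_max_left n p) hgn
  obtain ⟨hk1, hk2⟩ := hkey (max n p) g hgm hg1
  have hgq : g ∈ K (max n p + 2) := hmono (by omega) hgm
  let N' := Subgroup.map (e (max n p + 2)).toMonoidHom (N.subgroupOf (K (max n p + 2)))
  have hN' : N'.Normal :=
    Subgroup.Normal.map (hN.subgroupOf (K (max n p + 2))) _ (e (max n p + 2)).surjective
  have hxN' : (e (max n p + 2) ⟨g, hgq⟩) ∈ N' :=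
    ⟨⟨g, hgq⟩, (Subgroup.mem_subgroupOf).2 hgN, rfl⟩
  have hx1 : (e (max n p + 2) ⟨g, hgq⟩).1 ≠ 1 := hk1
  have hx2 : (e (max n p + 2) ⟨g, hgq⟩).2 ≠ 1 := hk2
  have htop := my_prod_normal_eq_top (hX5 _) (hY5 _) N' hN' hxN' hx1 hx2
  have haq : a ∈ K (max n p + 2) := hmono (le_trans (le_max_right n p) (by omega)) hp
  have hmem : e (max n p + 2) ⟨a, haq⟩ ∈ N' := htop ▸ Subgroup.mem_top _
  obtain ⟨z, hz, hze⟩ := hmem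
  have hza : z = ⟨a, haq⟩ := (e (max n p + 2)).injective hze
  rw [hza] at hz
  exact (Subgroup.mem_subgroupOf).1 hz
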